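/- arXiv:1205.1271 — 3 statements merged into one kernel-verified Lean document; each statement's English description precedes it below -/
import Mathlib

section
/- Let T' be a shadowless solution of an instance (G, S, T, k) of Disjoint Subset-DFVS Compression, and let C_ℓ be the last strongly connected component in a topological ordering of the strongly connected components of G ∖ T'. Then: (1) C_ℓ contains a nonempty subset of T; (2) no edge of S has both endpoints in C_ℓ; (3) for every edge (u,v) ∈ S with u ∈ C_ℓ, we have v ∈ T'; and (4) if T' contains no head of an S-edge, then C_ℓ contains no tail of an S-edge. -/
variable {V : Type*}

/-- `Reach E W a b`: there is a path from `a` to `b` in `G ∖ W`. -/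
def Reach (E : V → V → Prop) (W : Set V) (a b : V) : Prop :=
  a ∉ W ∧ b ∉ W ∧ Relation.ReflTransGen (fun x y => E x y ∧ x ∉ W ∧ y ∉ W) a b

/-- `G ∖ W` has a closed walk using an edge of `S` (an `S`-closed-walk). -/
def HasSCW (E : V → V → Prop) (S : Set (V × V)) (W : Set V) : Prop :=
  ∃ l : List V, l.Chain' E ∧ 2 ≤ l.length ∧ l.head? = l.getLast? ∧
    (∀ x ∈ l, x ∉ W) ∧ ∃ q ∈ l.zip l.tail, q ∈ S

lemma rtg_to_list {α : Type*} {R : α → α → Prop} {a b : α} (h : Relation.ReflTransGen R a b) :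
    ∃ l : List α, l ≠ [] ∧ l.head? = some a ∧ l.getLast? = some b ∧ l.Chain' R ∧
      ∀ x ∈ l, x = a ∨ ∃ y, R y x := by
  induction h with
  | refl => exact ⟨[a], by simp, rfl, rfl, List.isChain_singleton a, by simp⟩
  | @tail b c hab hbc ih =>
    obtain ⟨l, hne, hh, hl, hc, hmem⟩ := ih
    refine ⟨l ++ [c], by simp, ?_, ?_, ?_, ?_⟩
    · rwa [List.head?_append_of_ne_nil _ hne]
    · simp [List.getLast?_concat]
    · rw [List.Chain', List.isChain_append]
      refine ⟨hc, List.isChain_singleton _, ?_⟩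
      intro x hx y hy
      simp only [List.head?_cons, Option.mem_some_iff] at hy
      rw [hl, Option.mem_some_iff] at hx
      subst hx; subst hy; exact hbc
    · intro x hx
      rcases List.mem_append.1 hx with h | h
      · exact hmem x h
      · simp only [List.mem_singleton] at h
        subst h; exact Or.inr ⟨_, hbc⟩

/-- Properties of the last strongly connected component `C` of `G ∖ T'` for a
shadowless solution `T'` of an instance `(G, S, T, k)` of Disjoint Subset-DFVS
Compression:
(1) `C` contains a nonempty subset of `T`;
(2) no edge of `S` has both endpoints in `C`;
(3) for every edge `(u,v) ∈ S` with `u ∈ C` we have `v ∈ T'`;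
(4) if `T'` contains no head of an `S`-edge, then `C` contains no tail of an
`S`-edge.
Here `C` is a nonempty set of vertices of `G ∖ T'` that is strongly connected
in `G ∖ T'` and has no edges leaving it (the last SCC in topological order). -/
theorem stmt17 [Fintype V] (E : V → V → Prop) (S : Set (V × V))
    (hSE : ∀ p ∈ S, E p.1 p.2) (T : Set V) (k : ℕ)
    (hT : ¬ HasSCW E S T)
    (T' : Set V) (hT'T : Disjoint T' T) (hk : T'.ncard ≤ k)
    (hsol : ¬ HasSCW E S T')
    (hshadowless : ∀ v ∉ T',
      (∃ t ∈ T, Reach E T' v t) ∧ (∃ t ∈ T, Reach E T' t v))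
    (hTS : ∀ t ∈ T, ∃ p ∈ S, Reach E ∅ t p.1)
    (C : Set V) (hCne : C.Nonempty) (hCT' : Disjoint C T')
    (hCconn : ∀ a ∈ C, ∀ b ∈ C, Reach E T' a b)
    (hClast : ∀ a ∈ C, ∀ b : V, E a b → b ∉ T' → b ∈ C) :
    (C ∩ T).Nonempty ∧
      (∀ p ∈ S, ¬ (p.1 ∈ C ∧ p.2 ∈ C)) ∧
      (∀ p ∈ S, p.1 ∈ C → p.2 ∈ T') ∧
      ((∀ p ∈ S, p.2 ∉ T') → ∀ p ∈ S, p.1 ∉ C) := by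
  -- C is closed under reachability in G ∖ T'
  have hclosed : ∀ a ∈ C, ∀ b : V, Reach E T' a b → b ∈ C := by
    intro a ha b ⟨_, _, hrtg⟩
    induction hrtg with
    | refl => exact ha
    | tail hab hbc ih =>
      exact hClast _ (ih hbc.2.1) _ hbc.1 hbc.2.2
  -- (2)
  have h2 : ∀ p ∈ S, ¬ (p.1 ∈ C ∧ p.2 ∈ C) := by
    rintro p hp ⟨h1, h2⟩
    obtain ⟨h2n, h1n, hrtg⟩ := hCconn p.2 h2 p.1 h1
    obtain ⟨l, hne, hh, hl, hc, hmem⟩ := rtg_to_list hrtg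
    apply hsol
    obtain ⟨c, l', rfl⟩ := List.exists_cons_of_ne_nil hne
    simp only [List.head?_cons, Option.some_inj] at hh
    subst hh
    refine ⟨p.1 :: p.2 :: l', ?_, by simp, ?_, ?_, ⟨(p.1, p.2), ?_, by simpa using hp⟩⟩
    · exact List.IsChain.cons_cons (hSE p hp) (hc.imp fun _ _ h => h.1)
    · simpa using hl.symm
    · intro x hx
      rcases List.mem_cons.1 hx with rfl | hx
      · exact fun hmemT' => hCT'.ne_of_mem h1 hmemT' rfl
      · rcases hmem x hx with rfl | ⟨y, hy⟩
        · exact fun hmemT' => hCT'.ne_of_mem h2 hmemT' rfl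
        · exact hy.2.2
    · simp
  -- (3)
  have h3 : ∀ p ∈ S, p.1 ∈ C → p.2 ∈ T' := by
    intro p hp h1
    by_contra hn
    exact h2 p hp ⟨h1, hClast _ h1 _ (hSE p hp) hn⟩
  refine ⟨?_, h2, h3, fun hh p hp h1 => hh p hp (h3 p hp h1)⟩
  -- (1)
  obtain ⟨a, ha⟩ := hCne
  obtain ⟨⟨t, htT, hreach⟩, _⟩ :=
    hshadowless a (fun h => hCT'.ne_of_mem ha h rfl)
  exact ⟨t, hclosed a ha t hreach, htT⟩
end

section
/- In the auxiliary graph construction of Theorem 6.3: given G, S ⊆ E(G), nonempty T₀ ⊆ V(G), and the two-copy auxiliary graph G' with source s and sink t, if x is a k-critical vertex with respect to T₀ witnessed by u and W, then W' = {v_in, v_out : v ∈ W} is an s–t separator in G' of size at most 2k, and u_out is reachable from s in G' ∖ W'. -/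
variable {V : Type*}

/-- Vertices of the auxiliary graph: `Sum.inl (v, false)` is `v_in`,
`Sum.inl (v, true)` is `v_out`, `Sum.inr false` is the source `s`, and
`Sum.inr true` is the sink `t`. -/
abbrev Aux (V : Type*) := (V × Bool) ⊕ Bool

/-- The edge relation of the auxiliary graph `G'`: for each edge `(u,v)` of `G`
add `(u_out, v_in)` if `(u,v) ∈ S` and `(u_out, v_out)` otherwise; add
`(v_in, v_out)` and `(v_in, t)` for every vertex `v`; add `(s, v_out)` for
every `v ∈ T₀`. -/
def auxE (E : V → V → Prop) (S : Set (V × V)) (T₀ : Set V) :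
    Aux V → Aux V → Prop
  | Sum.inl (u, true), Sum.inl (v, false) => E u v ∧ (u, v) ∈ S
  | Sum.inl (u, true), Sum.inl (v, true) => E u v ∧ (u, v) ∉ S
  | Sum.inl (u, false), Sum.inl (v, true) => u = v
  | Sum.inl (_, false), Sum.inr true => True
  | Sum.inr false, Sum.inl (v, true) => v ∈ T₀
  | _, _ => False

/-- The lift `W' = {v_in, v_out : v ∈ W}` of a vertex set `W` to the auxiliary
graph. -/
def auxLift (W : Set V) : Set (Aux V) :=
  {a | ∃ v ∈ W, a = Sum.inl (v, false) ∨ a = Sum.inl (v, true)}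

lemma mem_auxLift_inl (W : Set V) (w : V) (bb : Bool) :
    Sum.inl (w, bb) ∈ auxLift W ↔ w ∈ W := by
  constructor
  · rintro ⟨v, hv, h | h⟩ <;> simp_all [auxLift]
  · intro h; exact ⟨w, h, by cases bb <;> simp⟩

lemma not_mem_auxLift_inr (W : Set V) (bb : Bool) :
    (Sum.inr bb : Aux V) ∉ auxLift W := by
  rintro ⟨v, hv, h | h⟩ <;> simp_all

lemma auxLift_ncard_le [Fintype V] (W : Set V) (k : ℕ) (hWk : W.ncard ≤ k) :
    (auxLift W).ncard ≤ 2 * k := by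
  have : auxLift W = (fun v => (Sum.inl (v, false) : Aux V)) '' W ∪
      (fun v => (Sum.inl (v, true) : Aux V)) '' W := by
    ext a
    simp only [auxLift, Set.mem_setOf_eq, Set.mem_union, Set.mem_image]
    constructor
    · rintro ⟨v, hv, h | h⟩
      · exact Or.inl ⟨v, hv, h.symm⟩
      · exact Or.inr ⟨v, hv, h.symm⟩
    · rintro (⟨v, hv, h⟩ | ⟨v, hv, h⟩)
      · exact ⟨v, hv, Or.inl h.symm⟩
      · exact ⟨v, hv, Or.inr h.symm⟩
  rw [this]
  calc _ ≤ _ := Set.ncard_union_le _ _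
    _ ≤ k + k := by
        have h1 := Set.ncard_image_of_injective W
          (f := fun v => (Sum.inl (v, false) : Aux V))
          (fun a b h => by simpa using h)
        have h2 := Set.ncard_image_of_injective W
          (f := fun v => (Sum.inl (v, true) : Aux V))
          (fun a b h => by simpa using h)
        omega
    _ = 2 * k := by ring

/-- If `x` is a `k`-critical vertex with respect to `T₀`, witnessed by `u` and
`W` (that is, `(u,x) ∈ S`, `W ⊆ V ∖ T₀` has `|W| ≤ k`, `x ∈ W`, `u` is
reachable from `T₀` in `G ∖ W`, and no edge of `S` is traversable from `T₀` in
`G ∖ W`), then `W' = {v_in, v_out : v ∈ W}` is an `s–t` separator of size at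
most `2k` in the auxiliary graph `G'`, and `u_out` is reachable from `s` in
`G' ∖ W'`. -/
theorem stmt18 [Fintype V] (E : V → V → Prop) (S : Set (V × V))
    (hSE : ∀ p ∈ S, E p.1 p.2) (T₀ : Set V) (hT₀ : T₀.Nonempty)
    (k : ℕ) (x u : V) (W : Set V)
    (hxT₀ : x ∉ T₀) (hux : (u, x) ∈ S)
    (hWT₀ : Disjoint W T₀) (hWk : W.ncard ≤ k) (hxW : x ∈ W)
    (hu : ∃ t ∈ T₀, Reach E W t u)
    (htrav : ∀ p ∈ S, ¬ (p.1 ∉ W ∧ p.2 ∉ W ∧ ∃ t ∈ T₀, Reach E W t p.1)) :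
    (auxLift W).ncard ≤ 2 * k ∧
      ¬ Reach (auxE E S T₀) (auxLift W) (Sum.inr false) (Sum.inr true) ∧
      Reach (auxE E S T₀) (auxLift W) (Sum.inr false) (Sum.inl (u, true)) :=  by
  obtain ⟨t₀, ht₀T, ht₀W, huW, hpath⟩ := hu
  set R : Aux V → Aux V → Prop :=
    fun a b => auxE E S T₀ a b ∧ a ∉ auxLift W ∧ b ∉ auxLift W with hR
  -- key: any vertex reachable from t₀ in G ∖ W is "safe": lifting works
  have key : ∀ b, Relation.ReflTransGen (fun x y => E x y ∧ x ∉ W ∧ y ∉ W) t₀ b →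
      Relation.ReflTransGen R (Sum.inl (t₀, true)) (Sum.inl (b, true)) := by
    intro b hb
    induction hb with
    | refl => exact Relation.ReflTransGen.refl
    | @tail b c h1 h2 ih =>
      obtain ⟨hbc, hbW, hcW⟩ := h2
      have hnS : (b, c) ∉ S := by
        intro hS
        exact htrav (b, c) hS ⟨hbW, hcW, t₀, ht₀T, ht₀W, hbW, h1⟩
      refine ih.tail ⟨?_, ?_, ?_⟩
      · exact ⟨hbc, hnS⟩
      · simpa [mem_auxLift_inl] using hbW
      · simpa [mem_auxLift_inl] using hcW
  refine ⟨auxLift_ncard_le W k hWk, ?_, ?_⟩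
  · -- no path from s to t in G' ∖ W'
    rintro ⟨-, -, hst⟩
    -- invariant along any walk from s
    have inv : ∀ a, Relation.ReflTransGen R (Sum.inr false) a →
        a = Sum.inr false ∨ ∃ w, a = Sum.inl (w, true) ∧ w ∉ W ∧
          ∃ t₁ ∈ T₀, Reach E W t₁ w := by
      intro a ha
      induction ha with
      | refl => exact Or.inl rfl
      | @tail a b h1 h2 ih =>
        obtain ⟨hE, haW, hbW⟩ := h2
        rcases ih with rfl | ⟨w, rfl, hwW, t₁, ht₁T, ht₁W, hwW', hwalk⟩
        · -- edges from s
          match b, hE with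
          | Sum.inl (v, true), hv =>
            have hvW : v ∉ W := by simpa [mem_auxLift_inl] using hbW
            exact Or.inr ⟨v, rfl, hvW, v, hv, hvW, hvW, Relation.ReflTransGen.refl⟩
        · -- edges from an out-vertex
          match b, hE with
          | Sum.inl (v, false), ⟨hEv, hSv⟩ =>
            exfalso
            have hvW : v ∉ W := by simpa [mem_auxLift_inl] using hbW
            exact htrav (w, v) hSv ⟨hwW, hvW, t₁, ht₁T, ht₁W, hwW, hwalk⟩
          | Sum.inl (v, true), ⟨hEv, hSv⟩ =>
            have hvW : v ∉ W := by simpa [mem_auxLift_inl] using hbW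
            exact Or.inr ⟨v, rfl, hvW, t₁, ht₁T, ht₁W, hvW,
              hwalk.tail ⟨hEv, hwW, hvW⟩⟩
    rcases inv _ hst with h | ⟨w, h, -⟩ <;> simp_all
  · -- u_out is reachable from s in G' ∖ W'
    refine ⟨not_mem_auxLift_inr W false, ?_, ?_⟩
    · simpa [mem_auxLift_inl] using huW
    · refine Relation.ReflTransGen.head (b := Sum.inl (t₀, true)) ⟨ht₀T, not_mem_auxLift_inr W false, ?_⟩
        (key u hpath)
      simpa [mem_auxLift_inl] using ht₀W
end

section
/- Replacement by an important separator preserves being a solution: Let (G, S, T, k) be an instance of Disjoint Subset-DFVS Compression with shadowless solution T', let T₀ ⊆ T be the subset of T in the last SCC of G ∖ T', and suppose no tail of an S-edge is reachable from T₀ in G ∖ T'. Let G⁺ be G with a new vertex t and an edge (u,t) for every tail u of an S-edge, let T** ⊆ T' be a minimal T₀–({t} ∪ (T ∖ T₀)) separator in G⁺ contained in the set of vertices of T' reachable from T₀ without passing other T' vertices, and let T*** be an important T₀–({t} ∪ (T ∖ T₀)) separator with |T***| ≤ |T**| and R⁺_{G⁺∖T**}(T₀) ⊊ R⁺_{G⁺∖T***}(T₀).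 Then T'' = (T' ∖ T**) ∪ T*** is also a solution of (G, S, T, k). -/
variable {V : Type*}

/-- `W` is an `X–Y` separator avoiding the undeletable vertices `Vinf`. -/
def IsSep (E : V → V → Prop) (Vinf X Y W : Set V) : Prop :=
  Disjoint W (X ∪ Y ∪ Vinf) ∧ ∀ x ∈ X, ∀ y ∈ Y, ¬ Reach E W x y

/-- A minimal `X–Y` separator: no proper subset is an `X–Y` separator. -/
def IsMinSep (E : V → V → Prop) (Vinf X Y W : Set V) : Prop :=
  IsSep E Vinf X Y W ∧ ∀ W' ⊂ W, ¬ IsSep E Vinf X Y W'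

/-- `R⁺_{G∖W}(X)`: the set of vertices reachable from `X` in `G ∖ W`. -/
def ReachSet (E : V → V → Prop) (W X : Set V) : Set V :=
  {b | ∃ a ∈ X, Reach E W a b}

/-- An important `X–Y` separator. -/
def IsImpSep (E : V → V → Prop) (Vinf X Y W : Set V) : Prop :=
  IsMinSep E Vinf X Y W ∧
    ¬ ∃ W', IsSep E Vinf X Y W' ∧ W'.ncard ≤ W.ncard ∧
      ReachSet E W X ⊂ ReachSet E W' X

/-- The edge relation of `G⁺`: `G` together with a new vertex `t = none` and an
edge `(u, t)` for every tail `u` of an `S`-edge. -/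
def plusE (E : V → V → Prop) (S : Set (V × V)) : Option V → Option V → Prop
  | some a, some b => E a b
  | some a, none => ∃ b, (a, b) ∈ S
  | none, _ => False

lemma chain'_reach_aux {α : Type*} {R : α → α → Prop} {l : List α} (h : l.Chain' R) :
    ∀ (i j : ℕ) (hij : i ≤ j) (hj : j < l.length),
      Relation.ReflTransGen R (l.get ⟨i, lt_of_le_of_lt hij hj⟩) (l.get ⟨j, hj⟩) := by
  intro i j hij
  induction hij with
  | refl => intro hj; exact Relation.ReflTransGen.refl
  | @step j' hle ih =>
      intro hj
      have hj' : j' < l.length := Nat.lt_of_succ_lt hj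
      exact (ih hj').tail (List.isChain_iff_getElem.mp h j' (by omega))

lemma closed_chain_reach {α : Type*} {R : α → α → Prop} {l : List α} (h : l.Chain' R)
    (hc : l.head? = l.getLast?) {x y : α} (hx : x ∈ l) (hy : y ∈ l) :
    Relation.ReflTransGen R x y := by
  obtain ⟨⟨i, hi⟩, rfl⟩ := List.mem_iff_get.mp hx
  obtain ⟨⟨j, hj⟩, rfl⟩ := List.mem_iff_get.mp hy
  have hne : l ≠ [] := List.ne_nil_of_length_pos (by omega)
  have hlast : l.length - 1 < l.length := by omega
  have h0 : 0 < l.length := by omega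
  have hheq : l.get ⟨l.length - 1, hlast⟩ = l.get ⟨0, h0⟩ := by
    have h1 : l.head? = some (l.get ⟨0, h0⟩) := by
      rw [List.head?_eq_getElem?, List.getElem?_eq_getElem h0, List.get_eq_getElem]
    have h2 : l.getLast? = some (l.get ⟨l.length - 1, hlast⟩) := by
      rw [List.getLast?_eq_getElem?, List.getElem?_eq_getElem hlast, List.get_eq_getElem]
    rw [h1, h2] at hc
    exact (Option.some_injective _ hc).symm
  have r1 : Relation.ReflTransGen R (l.get ⟨i, hi⟩) (l.get ⟨l.length - 1, hlast⟩) :=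
    chain'_reach_aux h i (l.length - 1) (by omega) hlast
  have r2 : Relation.ReflTransGen R (l.get ⟨0, h0⟩) (l.get ⟨j, hj⟩) :=
    chain'_reach_aux h 0 j (Nat.zero_le j) hj
  exact r1.trans (hheq ▸ r2)

/-- Replacement by an important separator preserves being a solution.  Let `T'`
be a shadowless solution of an instance `(G, S, T, k)` of Disjoint Subset-DFVS
Compression, let `C` be the last SCC of `G ∖ T'` and `T₀ = C ∩ T`, and suppose
no tail of an `S`-edge is reachable from `T₀` in `G ∖ T'`.  Let `T**` be a
minimal `T₀–({t} ∪ (T ∖ T₀))` separator in `G⁺` contained in the set of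
vertices of `T'` reachable from `T₀` without passing through other vertices of
`T'`, and let `T***` be an important `T₀–({t} ∪ (T ∖ T₀))` separator with
`|T***| ≤ |T**|` and `R⁺_{G⁺∖T**}(T₀) ⊊ R⁺_{G⁺∖T***}(T₀)`.  Then
`T'' = (T' ∖ T**) ∪ T***` is also a solution of `(G, S, T, k)`. -/
theorem stmt19 [Fintype V] (E : V → V → Prop) (S : Set (V × V))
    (hSE : ∀ p ∈ S, E p.1 p.2) (T : Set V) (k : ℕ)
    (hT : ¬ HasSCW E S T)
    (T' : Set V) (hT'T : Disjoint T' T) (hk : T'.ncard ≤ k)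
    (hsol : ¬ HasSCW E S T')
    (hshadowless : ∀ v ∉ T',
      (∃ t ∈ T, Reach E T' v t) ∧ (∃ t ∈ T, Reach E T' t v))
    -- `C` is the last SCC of `G ∖ T'` and `T₀ = C ∩ T` is nonempty
    (C : Set V) (hCne : C.Nonempty) (hCT' : Disjoint C T')
    (hCconn : ∀ a ∈ C, ∀ b ∈ C, Reach E T' a b)
    (hClast : ∀ a ∈ C, ∀ b : V, E a b → b ∉ T' → b ∈ C)
    (hT₀ne : (C ∩ T).Nonempty)
    -- no tail of an `S`-edge is reachable from `T₀` in `G ∖ T'`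
    (hreach : ∀ p ∈ S, ∀ t ∈ C ∩ T, ¬ Reach E T' t p.1)
    (Tss : Set V) (hTss : Tss ⊆ T')
    (hTssStar : ∀ w ∈ Tss, ∃ t ∈ C ∩ T, ∃ z : V, Reach E T' t z ∧ E z w)
    (hTssMin : IsMinSep (plusE E S) ∅ (some '' (C ∩ T))
      (insert none (some '' (T \ (C ∩ T)))) (some '' Tss))
    (Tsss : Set V)
    (hTsssImp : IsImpSep (plusE E S) ∅ (some '' (C ∩ T))
      (insert none (some '' (T \ (C ∩ T)))) (some '' Tsss))
    (hcard : Tsss.ncard ≤ Tss.ncard)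
    (hdom : ReachSet (plusE E S) (some '' Tss) (some '' (C ∩ T)) ⊂
      ReachSet (plusE E S) (some '' Tsss) (some '' (C ∩ T))) :
    Disjoint ((T' \ Tss) ∪ Tsss) T ∧ ((T' \ Tss) ∪ Tsss).ncard ≤ k ∧
      ¬ HasSCW E S ((T' \ Tss) ∪ Tsss) := by

  classical
  obtain ⟨⟨⟨hdisj, hsep⟩, -⟩, -⟩ := hTsssImp
  -- `Tsss` is disjoint from `T`
  have hTsssT : ∀ t ∈ T, t ∉ Tsss := by
    intro t ht htm
    have hmem : some t ∈ some '' (C ∩ T) ∪ insert none (some '' (T \ (C ∩ T)))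
        ∪ (∅ : Set (Option V)) := by
      by_cases hc : t ∈ C
      · exact Or.inl (Or.inl ⟨t, ⟨hc, ht⟩, rfl⟩)
      · exact Or.inl (Or.inr (Or.inr ⟨t, ⟨ht, fun h => hc h.1⟩, rfl⟩))
    exact Set.disjoint_left.mp hdisj ⟨t, htm, rfl⟩ hmem
  refine ⟨?_, ?_, ?_⟩
  · exact Set.disjoint_union_left.mpr
      ⟨hT'T.mono_left Set.diff_subset,
       Set.disjoint_left.mpr fun a ha hat => hTsssT a hat ha⟩
  · calc ((T' \ Tss) ∪ Tsss).ncard ≤ (T' \ Tss).ncard + Tsss.ncard :=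
          Set.ncard_union_le _ _
      _ ≤ (T' \ Tss).ncard + Tss.ncard := by omega
      _ = T'.ncard := Set.ncard_diff_add_ncard_of_subset hTss (Set.toFinite _)
      _ ≤ k := hk
  · rintro ⟨l, hchain, hlen, hclosed, havoid, q, hqz, hqS⟩
    set W'' : Set V := (T' \ Tss) ∪ Tsss with hW''
    -- some vertex of the walk lies in `T'` (hence in `Tss`)
    have hex : ∃ w ∈ l, w ∈ T' := by
      by_contra hno
      push_neg at hno
      exact hsol ⟨l, hchain, hlen, hclosed, hno, q, hqz, hqS⟩
    obtain ⟨w, hwl, hwT'⟩ := hex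
    have hwW'' : w ∉ W'' := havoid w hwl
    have hwTss : w ∈ Tss := by
      by_contra hwTss
      exact hwW'' (Or.inl ⟨hwT', hwTss⟩)
    -- the tail of the S-edge on the walk
    obtain ⟨u, v⟩ := q
    have hul : u ∈ l := (List.of_mem_zip hqz).1
    obtain ⟨t, htCT, z, ⟨htT', hzT', hpath⟩, hEzw⟩ := hTssStar w hwTss
    have htnT' : t ∉ T' := Set.disjoint_left.mp hCT' htCT.1
    have htnTsss : t ∉ Tsss := hTsssT t htCT.2
    have htW'' : t ∉ W'' := fun h => h.elim (fun h => htnT' h.1) htnTsss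
    have hsomet : (some t : Option V) ∈ some '' (C ∩ T) := ⟨t, htCT, rfl⟩
    -- key invariant along the path from `t` to `z`
    have key : ∀ z', Relation.ReflTransGen (fun x y => E x y ∧ x ∉ T' ∧ y ∉ T') t z' →
        Reach (plusE E S) (some '' Tss) (some t) (some z') ∧
        Relation.ReflTransGen (fun x y => E x y ∧ x ∉ W'' ∧ y ∉ W'') t z' ∧ z' ∉ W'' := by
      intro z' hz'
      have htTss : (some t : Option V) ∉ some '' Tss := by
        rintro ⟨a, haTss, ha⟩
        exact htnT' (hTss ((Option.some_injective V ha) ▸ haTss))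
      induction hz' with
      | refl => exact ⟨⟨htTss, htTss, Relation.ReflTransGen.refl⟩,
          Relation.ReflTransGen.refl, htW''⟩
      | @tail b c hb hstep ih =>
          obtain ⟨habE, hbT', hcT'⟩ := hstep
          obtain ⟨hreachTss, hreachW'', hbW''⟩ := ih
          have hcTss : (some c : Option V) ∉ some '' Tss := by
            rintro ⟨a, haTss, ha⟩
            exact hcT' (hTss ((Option.some_injective V ha) ▸ haTss))
          have hreachTss' : Reach (plusE E S) (some '' Tss) (some t) (some c) :=
            ⟨htTss, hcTss, hreachTss.2.2.tail ⟨habE, hreachTss.2.1, hcTss⟩⟩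
          have hcR : (some c : Option V) ∈
              ReachSet (plusE E S) (some '' Tsss) (some '' (C ∩ T)) :=
            hdom.subset ⟨some t, hsomet, hreachTss'⟩
          have hcTsss : c ∉ Tsss := by
            obtain ⟨a, -, -, hcn, -⟩ := hcR
            exact fun h => hcn ⟨c, h, rfl⟩
          have hcW'' : c ∉ W'' := fun h => h.elim (fun h => hcT' h.1) hcTsss
          exact ⟨hreachTss', hreachW''.tail ⟨habE, hbW'', hcW''⟩, hcW''⟩
    obtain ⟨-, hzreach, hzW''⟩ := key z hpath
    -- reach `w` in `G ∖ W''`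
    have htw : Relation.ReflTransGen (fun x y => E x y ∧ x ∉ W'' ∧ y ∉ W'') t w :=
      hzreach.tail ⟨hEzw, hzW'', hwW''⟩
    -- the closed walk gives reachability from `w` to `u` in `G ∖ W''`
    have hchain'' : l.Chain' (fun x y => E x y ∧ x ∉ W'' ∧ y ∉ W'') := by
      unfold List.Chain' at hchain ⊢
      rw [List.isChain_iff_getElem] at hchain ⊢
      intro i hi
      exact ⟨hchain i hi, havoid _ (List.getElem_mem _), havoid _ (List.getElem_mem _)⟩
    have hwu : Relation.ReflTransGen (fun x y => E x y ∧ x ∉ W'' ∧ y ∉ W'') w u :=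
      closed_chain_reach hchain'' hclosed hwl hul
    have htu := htw.trans hwu
    -- lift to `G⁺ ∖ Tsss` and reach `none`
    have hlift : Relation.ReflTransGen (fun x y => plusE E S x y ∧
        x ∉ some '' Tsss ∧ y ∉ some '' Tsss) (some t) (some u) := by
      refine Relation.ReflTransGen.lift some (fun a b hab => ?_) _ _ htu
      obtain ⟨habE, haW, hbW⟩ := hab
      have ha : (some a : Option V) ∉ some '' Tsss := by
        rintro ⟨x, hx, hxe⟩
        exact haW (Or.inr ((Option.some_injective V hxe) ▸ hx))
      have hb : (some b : Option V) ∉ some '' Tsss := by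
        rintro ⟨x, hx, hxe⟩
        exact hbW (Or.inr ((Option.some_injective V hxe) ▸ hx))
      exact ⟨habE, ha, hb⟩
    have huW'' : u ∉ W'' := havoid u hul
    have hunone : plusE E S (some u) none := ⟨v, hqS⟩
    have hnone : (none : Option V) ∉ some '' Tsss := by rintro ⟨x, -, hx⟩; cases hx
    have hsu : (some u : Option V) ∉ some '' Tsss := by
      rintro ⟨x, hx, hxe⟩
      exact huW'' (Or.inr ((Option.some_injective V hxe) ▸ hx))
    have hst : (some t : Option V) ∉ some '' Tsss := by
      rintro ⟨x, hx, hxe⟩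
      exact htnTsss ((Option.some_injective V hxe) ▸ hx)
    have : Reach (plusE E S) (some '' Tsss) (some t) none :=
      ⟨hst, hnone, hlift.tail ⟨hunone, hsu, hnone⟩⟩
    exact hsep (some t) hsomet none (Set.mem_insert _ _) this
end
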